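/- arXiv:1412.3265 — 6 statements merged into one kernel-verified Lean document; each statement's English description precedes it below -/
import Mathlib

section
/- Let x ≥ 2 and ρ ≥ 2 be integers with x^(ρ-1) ≡ 1 (mod ρ). Define J_n = ⌊x^(n+1)/ρ⌋ - ⌊x^n/ρ⌋. Then for all n ≥ 0, J_{n+ρ-1} = (x-1)·(J_{n+ρ-2} + J_{n+ρ-3} + ... + J_{n+1}) + x·J_n, where the sum ranges over the ρ-2 terms J_{n+1},...,J_{n+ρ-2}. -/
theorem stmt_1 (x ρ : ℕ) (hx : 2 ≤ x) (hρ : 2 ≤ ρ)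
    (hferm : x ^ (ρ - 1) ≡ 1 [MOD ρ])
    (J : ℕ → ℕ) (hJ : ∀ n, J n = x ^ (n + 1) / ρ - x ^ n / ρ) :
    ∀ n, J (n + ρ - 1) =
      (x - 1) * (∑ i ∈ Finset.Ico 1 (ρ - 1), J (n + ρ - 1 - i)) + x * J n := by
  intro n
  set s := ρ - 1 with hsdef
  have hs1 : 1 ≤ s := by omega
  set F : ℕ → ℕ := fun m => x ^ m / ρ with hF
  have hmono : ∀ a b : ℕ, a ≤ b → F a ≤ F b := fun a b h =>
    Nat.div_le_div_right (Nat.pow_le_pow_right (by omega) h)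
  have hJ' : ∀ m, (J m : ℤ) = (F (m + 1) : ℤ) - F m := by
    intro m
    rw [hJ m, Nat.cast_sub (hmono m (m + 1) (by omega))]
  have hmod : ∀ m, x ^ (m + s) % ρ = x ^ m % ρ := by
    intro m
    have h : x ^ (m + s) ≡ x ^ m * 1 [MOD ρ] := by
      rw [pow_add]
      exact (Nat.ModEq.refl _).mul hferm
    simpa [Nat.ModEq] using h
  have hkey : ∀ m, (ρ : ℤ) * ((F (m + s) : ℤ) - F m) = (x : ℤ) ^ (m + s) - (x : ℤ) ^ m := by
    intro m
    have h1 := Nat.div_add_mod (x ^ (m + s)) ρ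
    have h2 := Nat.div_add_mod (x ^ m) ρ
    have h3 := hmod m
    have h1' : (ρ : ℤ) * (F (m + s) : ℤ) + ((x ^ (m + s) % ρ : ℕ) : ℤ) = (x : ℤ) ^ (m + s) := by
      exact_mod_cast congrArg (Nat.cast : ℕ → ℤ) h1
    have h2' : (ρ : ℤ) * (F m : ℤ) + ((x ^ m % ρ : ℕ) : ℤ) = (x : ℤ) ^ m := by
      exact_mod_cast congrArg (Nat.cast : ℕ → ℤ) h2
    have h3' : ((x ^ (m + s) % ρ : ℕ) : ℤ) = ((x ^ m % ρ : ℕ) : ℤ) := by exact_mod_cast h3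
    linarith
  -- rewrite indices
  have hidx : n + ρ - 1 = n + s := by omega
  rw [hidx]
  -- pass to ℤ
  have hcast : ∀ a b : ℕ, (a : ℤ) = b → a = b := fun a b h => by exact_mod_cast h
  apply hcast
  push_cast [Nat.cast_sub (by omega : 1 ≤ x)]
  -- sum computation
  have hsum : (∑ i ∈ Finset.Ico 1 s, (J (n + s - i) : ℤ)) = (F (n + s) : ℤ) - F (n + 1) := by
    rw [Finset.sum_Ico_eq_sum_range]
    have hre : ∀ j ∈ Finset.range (s - 1), (J (n + s - (1 + j)) : ℤ) =
        (fun k => (J (n + 1 + k) : ℤ)) (s - 1 - 1 - j) := by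
      intro j hj
      simp only [Finset.mem_range] at hj
      have h : n + s - (1 + j) = n + 1 + (s - 1 - 1 - j) := by omega
      rw [h]
    rw [Finset.sum_congr rfl hre, Finset.sum_range_reflect (fun k => (J (n + 1 + k) : ℤ)) (s - 1)]
    have : ∀ j ∈ Finset.range (s - 1), (J (n + 1 + j) : ℤ) =
        (fun k => (F (n + 1 + k) : ℤ)) (j + 1) - (fun k => (F (n + 1 + k) : ℤ)) j := by
      intro j hj
      have h : n + 1 + (j + 1) = n + 1 + j + 1 := by omega
      simp only [h]
      rw [hJ' (n + 1 + j)]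
    rw [Finset.sum_congr rfl this, Finset.sum_range_sub (fun k => (F (n + 1 + k) : ℤ)) (s - 1)]
    have h1 : n + 1 + (s - 1) = n + s := by omega
    have h2 : n + 1 + 0 = n + 1 := by omega
    simp only [h1, h2]
  rw [hsum, hJ' (n + s), hJ' n]
  -- main identity
  have h1 := hkey n
  have h2 := hkey (n + 1)
  have hx2 : (x : ℤ) ^ (n + 1 + s) - (x : ℤ) ^ (n + 1) = x * ((x : ℤ) ^ (n + s) - x ^ n) := by
    have e1 : n + 1 + s = (n + s) + 1 := by omega
    rw [e1, pow_succ, pow_succ]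
    ring
  have h3 : (ρ : ℤ) * ((F (n + 1 + s) : ℤ) - F (n + 1)) =
      (ρ : ℤ) * ((x : ℤ) * ((F (n + s) : ℤ) - F n)) := by
    rw [h2, hx2, ← h1]; ring
  have hρ0 : (ρ : ℤ) ≠ 0 := by positivity
  have h4 : (F (n + 1 + s) : ℤ) - F (n + 1) = (x : ℤ) * ((F (n + s) : ℤ) - F n) :=
    mul_left_cancel₀ hρ0 h3
  have e2 : n + s + 1 = n + 1 + s := by omega
  rw [e2]
  linarith [h4]
end

section
/- Let x ≥ 2 and ρ ≥ 2 be integers with x^(ρ-1) ≡ 1 (mod ρ). Then for all n ≥ 0, ⌊x^(n+ρ)/ρ⌋ - ⌊x^(n+ρ-1)/ρ⌋ = (x-1)·(⌊x^(n+ρ-1)/ρ⌋ - ⌊x^n/ρ⌋) + ⌊x^(n+1)/ρ⌋ - ⌊x^n/ρ⌋. -/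
theorem stmt_2 (x ρ : ℕ) (hx : 2 ≤ x) (hρ : 2 ≤ ρ)
    (hferm : x ^ (ρ - 1) ≡ 1 [MOD ρ]) :
    ∀ n, x ^ (n + ρ) / ρ - x ^ (n + ρ - 1) / ρ =
      (x - 1) * (x ^ (n + ρ - 1) / ρ - x ^ n / ρ) + (x ^ (n + 1) / ρ - x ^ n / ρ) := by
  intro n
  have hρ0 : 0 < ρ := by omega
  have hx1 : 1 ≤ x := by omega
  -- x^(n+ρ-1) ≡ x^n mod ρ
  have hpow : x ^ (n + ρ - 1) = x ^ n * x ^ (ρ - 1) := by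
    rw [← pow_add]; congr 1; omega
  have hmod : x ^ (n + ρ - 1) % ρ = x ^ n % ρ := by
    have : x ^ n * x ^ (ρ - 1) ≡ x ^ n * 1 [MOD ρ] := hferm.mul_left _
    simpa [hpow, Nat.ModEq] using this
  have e1 : x ^ (n + ρ) = x * x ^ (n + ρ - 1) := by
    rw [← pow_succ']; congr 1; omega
  have e2 : x ^ (n + 1) = x * x ^ n := by rw [pow_succ, mul_comm]
  set q1 := x ^ (n + ρ - 1) / ρ with hq1
  set q0 := x ^ n / ρ with hq0
  set r := x ^ n % ρ with hr
  have d1 : x ^ (n + ρ - 1) = ρ * q1 + r := by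
    rw [← hmod]; exact (Nat.div_add_mod _ _).symm
  have d0 : x ^ n = ρ * q0 + r := (Nat.div_add_mod _ _).symm
  have hA : x ^ (n + ρ) / ρ = x * q1 + (x * r) / ρ := by
    rw [e1, d1, Nat.mul_add, ← Nat.mul_assoc, Nat.mul_comm x ρ, Nat.mul_assoc,
      Nat.mul_add_div hρ0]
  have hB : x ^ (n + 1) / ρ = x * q0 + (x * r) / ρ := by
    rw [e2, d0, Nat.mul_add, ← Nat.mul_assoc, Nat.mul_comm x ρ, Nat.mul_assoc,
      Nat.mul_add_div hρ0]
  have hm : q0 ≤ q1 := Nat.div_le_div_right (by rw [hpow]; exact Nat.le_mul_of_pos_right _ (pow_pos (by omega) _))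
  have hd : x * (q1 - q0) = x * q1 - x * q0 := Nat.mul_sub x q1 q0
  have he : (x - 1) * (q1 - q0) = x * (q1 - q0) - (q1 - q0) := by
    rw [Nat.sub_mul, one_mul]
  have hu : q1 ≤ x * q1 := Nat.le_mul_of_pos_left _ (by omega)
  have hv : q0 ≤ x * q0 := Nat.le_mul_of_pos_left _ (by omega)
  have huv : x * q0 ≤ x * q1 := Nat.mul_le_mul_left _ hm
  have hw : q1 - q0 ≤ x * (q1 - q0) := Nat.le_mul_of_pos_left _ (by omega)
  rw [hA, hB, he, hd]
  have hm3 : q1 ≤ x * q1 + x * r / ρ := le_trans hu (Nat.le_add_right _ _)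
  generalize x * q1 = u at *
  generalize x * q0 = v at *
  generalize x * r / ρ = c at *
  omega
end

section
/- Let x ≥ 2 and ρ ≥ 2 be integers with x^(ρ-1) ≡ 1 (mod ρ), and let S_n = ⌊x^(n+1)/ρ⌋. Then there exists an integer constant π (independent of n) such that for all n ≥ 0, S_{n+ρ-1} = (x-1)·(S_{n+ρ-2} + ... + S_{n+1}) + x·S_n + π. -/
theorem stmt_10 (x ρ : ℕ) (hx : 2 ≤ x) (hρ : 2 ≤ ρ)
    (hferm : x ^ (ρ - 1) ≡ 1 [MOD ρ])
    (S : ℕ → ℕ) (hS : ∀ n, S n = x ^ (n + 1) / ρ) :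
    ∃ π : ℤ, ∀ n, (S (n + ρ - 1) : ℤ) =
      ((x : ℤ) - 1) * (∑ i ∈ Finset.Ico 1 (ρ - 1), (S (n + ρ - 1 - i) : ℤ)) +
        (x : ℤ) * (S n : ℤ) + π := by
  obtain ⟨k, rfl⟩ : ∃ k, ρ = k + 1 := ⟨ρ - 1, by omega⟩
  have hk1 : 1 ≤ k := by omega
  have hfix : ∀ a : ℕ, a + (k + 1) - 1 = a + k := fun a => by omega
  simp only [Nat.add_sub_cancel] at hferm
  simp only [hfix, Nat.add_sub_cancel]
  set r : ℕ → ℕ := fun n => x ^ (n + 1) % (k + 1) with hrdef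
  have hr : ∀ m, ((k : ℤ) + 1) * (S m : ℤ) = (x : ℤ) ^ (m + 1) - (r m : ℤ) := by
    intro m
    have h := Nat.div_add_mod (x ^ (m + 1)) (k + 1)
    zify at h
    rw [hS m]
    simp only [hrdef]
    push_cast at h ⊢
    linarith
  have hper : ∀ m, r (m + k) = r m := by
    intro m
    simp only [hrdef]
    show x ^ (m + k + 1) % (k + 1) = x ^ (m + 1) % (k + 1)
    have h1 : x ^ (m + k + 1) = x ^ (m + 1) * x ^ k := by
      rw [← pow_add]; congr 1; omega
    rw [h1]
    have h2 : x ^ (m + 1) * x ^ k ≡ x ^ (m + 1) * 1 [MOD k + 1] :=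
      Nat.ModEq.mul_left _ hferm
    simpa [Nat.ModEq] using h2
  set T : ℕ → ℤ := fun n => ∑ j ∈ Finset.range k, (r (n + j) : ℤ) with hTdef
  have hTstep : ∀ n, T (n + 1) = T n := by
    intro n
    have h1 : ∑ j ∈ Finset.range (k + 1), (r (n + j) : ℤ)
        = ∑ j ∈ Finset.range k, (r (n + j) : ℤ) + (r (n + k) : ℤ) :=
      Finset.sum_range_succ _ _
    have h2 : ∑ j ∈ Finset.range (k + 1), (r (n + j) : ℤ)
        = ∑ j ∈ Finset.range k, (r (n + (j + 1)) : ℤ) + (r (n + 0) : ℤ) :=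
      Finset.sum_range_succ' _ _
    have h3 : ∑ j ∈ Finset.range k, (r (n + (j + 1)) : ℤ)
        = ∑ j ∈ Finset.range k, (r (n + 1 + j) : ℤ) :=
      Finset.sum_congr rfl fun j _ => by rw [show n + (j + 1) = n + 1 + j from by omega]
    have h5 : ((r (n + k) : ℕ) : ℤ) = (r n : ℤ) := congrArg (Nat.cast : ℕ → ℤ) (hper n)
    simp only [hTdef]
    rw [h3] at h2
    simp only [Nat.add_zero] at h2
    have := h2.symm.trans h1
    linarith
  have hT : ∀ n, T n = T 0 := by
    intro n
    induction n with
    | zero => rfl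
    | succ m ih => rw [hTstep m, ih]
  have key : ∀ n, ((k : ℤ) + 1) * ((S (n + k) : ℤ)
      - (((x : ℤ) - 1) * (∑ i ∈ Finset.Ico 1 k, (S (n + k - i) : ℤ))
        + (x : ℤ) * (S n : ℤ)))
      = ((x : ℤ) - 1) * T n := by
    intro n
    have reidx : (∑ i ∈ Finset.Ico 1 k, (S (n + k - i) : ℤ))
        = ∑ j ∈ Finset.range (k - 1), (S (n + j + 1) : ℤ) := by
      rw [Finset.sum_Ico_eq_sum_range]
      rw [← Finset.sum_range_reflect (fun j => (S (n + j + 1) : ℤ)) (k - 1)]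
      refine Finset.sum_congr rfl fun j hj => ?_
      have hj' := Finset.mem_range.mp hj
      rw [show n + k - (1 + j) = n + (k - 1 - 1 - j) + 1 from by omega]
    have geom : ((x : ℤ) - 1) * (∑ j ∈ Finset.range (k - 1), (x : ℤ) ^ (n + j + 2))
        = (x : ℤ) ^ (n + k + 1) - (x : ℤ) ^ (n + 2) := by
      have h := Finset.sum_range_sub (fun j => (x : ℤ) ^ (n + j + 2)) (k - 1)
      rw [show n + (k - 1) + 2 = n + k + 1 from by omega, show n + 0 + 2 = n + 2 from by omega] at h
      rw [Finset.mul_sum, ← h]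
      refine Finset.sum_congr rfl fun j _ => ?_
      rw [show n + (j + 1) + 2 = (n + j + 2) + 1 from by omega, pow_succ]
      ring
    have E3 : ((k : ℤ) + 1) * (∑ j ∈ Finset.range (k - 1), (S (n + j + 1) : ℤ))
        = (∑ j ∈ Finset.range (k - 1), (x : ℤ) ^ (n + j + 2))
          - ∑ j ∈ Finset.range (k - 1), (r (n + j + 1) : ℤ) := by
      rw [Finset.mul_sum, ← Finset.sum_sub_distrib]
      refine Finset.sum_congr rfl fun j _ => ?_
      rw [hr (n + j + 1), show n + j + 1 + 1 = n + j + 2 from by omega]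
    have E6 : T n = (r n : ℤ) + ∑ j ∈ Finset.range (k - 1), (r (n + j + 1) : ℤ) := by
      have h := Finset.sum_range_succ' (fun j => (r (n + j) : ℤ)) (k - 1)
      rw [show k - 1 + 1 = k from by omega] at h
      simp only [Nat.add_zero] at h
      simp only [hTdef]
      rw [h, add_comm]
      congr 1
    rw [reidx]
    have E1 := hr (n + k)
    have E2 := hr n
    have E5 : ((r (n + k) : ℕ) : ℤ) = (r n : ℤ) := congrArg (Nat.cast : ℕ → ℤ) (hper n)
    linear_combination E1 - (x : ℤ) * E2 - ((x : ℤ) - 1) * E3 - geom - E5 - ((x : ℤ) - 1) * E6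
  refine ⟨(S (0 + k) : ℤ) - (((x : ℤ) - 1) * (∑ i ∈ Finset.Ico 1 k, (S (0 + k - i) : ℤ))
      + (x : ℤ) * (S 0 : ℤ)), ?_⟩
  intro n
  have h1 := key n
  have h2 := key 0
  rw [hT n] at h1
  have h3 := h1.trans h2.symm
  have hk0 : ((k : ℤ) + 1) ≠ 0 := by positivity
  have h4 := mul_left_cancel₀ hk0 h3
  linarith
end

section
/- Let x ≥ 2 and ρ ≥ 2 with gcd(x, ρ) = 1 and ρ prime. Define J_n = ⌊x^(n+1)/ρ⌋ - ⌊x^n/ρ⌋. Then J satisfies the recurrence J_{n+ρ-1} = (x-1)·Σ_{i=1}^{ρ-2} J_{n+ρ-1-i} + x·J_n for all n ≥ 0. -/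
theorem stmt_14 (x ρ : ℕ) (hx : 2 ≤ x) (hρ : 2 ≤ ρ)
    (hprime : ρ.Prime) (hcop : Nat.Coprime x ρ)
    (J : ℕ → ℕ) (hJ : ∀ n, J n = x ^ (n + 1) / ρ - x ^ n / ρ) :
    ∀ n, J (n + ρ - 1) =
      (x - 1) * (∑ i ∈ Finset.Ico 1 (ρ - 1), J (n + ρ - 1 - i)) + x * J n := by
  intro n
  set m := ρ - 1 with hm
  have hm1 : 1 ≤ m := by omega
  have hρm : ρ = m + 1 := by omega
  have hρ0 : (ρ : ℤ) ≠ 0 := by positivity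
  set A : ℕ → ℕ := fun k => x ^ k / ρ with hA
  have hmono : ∀ k, A k ≤ A (k + 1) := by
    intro k
    exact Nat.div_le_div_right (Nat.pow_le_pow_right (by omega) (by omega))
  have hJZ : ∀ k, (J k : ℤ) = (A (k + 1) : ℤ) - A k := by
    intro k
    rw [hJ k]
    exact Nat.cast_sub (hmono k)
  -- Fermat: x^m ≡ 1 [MOD ρ]
  have hferm : x ^ m ≡ 1 [MOD ρ] := by
    have := Nat.ModEq.pow_totient hcop
    rwa [Nat.totient_prime hprime] at this
  have hr : ∀ k, x ^ (k + m) % ρ = x ^ k % ρ := by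
    intro k
    have : x ^ (k + m) ≡ x ^ k * 1 [MOD ρ] := by
      rw [pow_add]
      exact Nat.ModEq.mul_left _ hferm
    simpa [Nat.ModEq] using this
  -- key identities in ℤ
  have hdm : ∀ k, (ρ : ℤ) * A k = (x : ℤ) ^ k - (x ^ k % ρ : ℕ) := by
    intro k
    have h : ρ * A k + x ^ k % ρ = x ^ k := Nat.div_add_mod _ _
    have h' : (ρ : ℤ) * (A k : ℤ) + ((x ^ k % ρ : ℕ) : ℤ) = ((x ^ k : ℕ) : ℤ) := by
      exact_mod_cast congrArg (Nat.cast : ℕ → ℤ) h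
    have hp : ((x ^ k : ℕ) : ℤ) = (x : ℤ) ^ k := by push_cast; ring
    linarith
  -- goal indices: n + ρ - 1 = n + m
  have hidx : n + ρ - 1 = n + m := by omega
  rw [hidx]
  -- rewrite the sum: reflect and telescope
  have hsum : (∑ i ∈ Finset.Ico 1 m, (J (n + m - i) : ℤ))
      = (A (n + m) : ℤ) - A (n + 1) := by
    have hrefl : ∑ i ∈ Finset.Ico 1 m, (J (n + m - i) : ℤ)
        = ∑ j ∈ Finset.Ico 1 m, (J (n + j) : ℤ) := by
      apply Finset.sum_nbij' (fun i => m - i) (fun j => m - j)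
      · intro a ha; simp only [Finset.mem_Ico] at *; omega
      · intro a ha; simp only [Finset.mem_Ico] at *; omega
      · intro a ha; simp only [Finset.mem_Ico] at ha; omega
      · intro a ha; simp only [Finset.mem_Ico] at ha; omega
      · intro a ha; simp only [Finset.mem_Ico] at ha
        congr 2; omega
    rw [hrefl]
    have : ∑ j ∈ Finset.Ico 1 m, (J (n + j) : ℤ)
        = ∑ j ∈ Finset.range (m - 1), (J (n + 1 + j) : ℤ) := by
      rw [Finset.sum_Ico_eq_sum_range]
      apply Finset.sum_congr rfl
      intro i _
      congr 2
      omega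
    rw [this]
    have htel : ∑ j ∈ Finset.range (m - 1),
        ((A (n + 1 + (j + 1)) : ℤ) - A (n + 1 + j))
        = (A (n + 1 + (m - 1)) : ℤ) - A (n + 1 + 0) := by
      exact Finset.sum_range_sub (fun j => (A (n + 1 + j) : ℤ)) (m - 1)
    calc ∑ j ∈ Finset.range (m - 1), (J (n + 1 + j) : ℤ)
        = ∑ j ∈ Finset.range (m - 1), ((A (n + 1 + (j + 1)) : ℤ) - A (n + 1 + j)) := by
          apply Finset.sum_congr rfl; intro j _
          rw [hJZ]
          norm_num [Nat.add_assoc]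
      _ = (A (n + 1 + (m - 1)) : ℤ) - A (n + 1 + 0) := htel
      _ = (A (n + m) : ℤ) - A (n + 1) := by
          rw [show n + 1 + (m - 1) = n + m from by omega,
            show n + 1 + 0 = n + 1 from rfl]
  -- now prove the goal by casting to ℤ
  have hx1 : ((x - 1 : ℕ) : ℤ) = (x : ℤ) - 1 := by
    have : 1 ≤ x := by omega
    push_cast [Nat.cast_sub this]; ring
  zify
  rw [hJZ, hJZ, hx1, hsum]
  -- the four div identities
  have h1 := hdm n
  have h2 := hdm (n + 1)
  have h3 := hdm (n + m)
  have h4 := hdm (n + m + 1)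
  have e3 : x ^ (n + m) % ρ = x ^ n % ρ := hr n
  have e4 : x ^ (n + m + 1) % ρ = x ^ (n + 1) % ρ := by
    have := hr (n + 1)
    rwa [show n + 1 + m = n + m + 1 by ring] at this
  rw [e3] at h3
  rw [e4] at h4
  apply mul_left_cancel₀ hρ0
  have hpowsplit : (x : ℤ) ^ (n + m) = (x : ℤ) ^ n * (x : ℤ) ^ m := by
    rw [pow_add]
  have hpowsplit2 : (x : ℤ) ^ (n + m + 1) = (x : ℤ) ^ n * (x : ℤ) ^ m * x := by
    rw [pow_add, pow_add, pow_one]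
  rw [hpowsplit2] at h4
  rw [hpowsplit] at h3
  rw [show (x:ℤ)^(n+1) = (x:ℤ)^n * x by rw [pow_add, pow_one]] at h2
  linear_combination h4 - (x : ℤ) * h3 - h2 + (x : ℤ) * h1
end

section
/- Let x ≥ 2 and ρ ≥ 2 be integers with x^(ρ-1) ≡ 1 (mod ρ), and let K be the (ρ-1)×(ρ-1) companion matrix with first row (x-1, x-1, ..., x-1, x), subdiagonal of 1's, and 0 elsewhere. If u^n denotes the column vector (J_n, J_{n-1}, ..., J_{n-ρ+2})ᵀ with J_k = ⌊x^(k+1)/ρ⌋ - ⌊x^k/ρ⌋, then K·u^n = u^{n+1} for all n ≥ ρ - 2. -/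
theorem stmt_15 (x ρ : ℕ) (hx : 2 ≤ x) (hρ : 2 ≤ ρ)
    (hferm : x ^ (ρ - 1) ≡ 1 [MOD ρ])
    (J : ℕ → ℤ) (hJ : ∀ n, J n = (x ^ (n + 1) / ρ : ℕ) - (x ^ n / ρ : ℕ))
    (K : Matrix (Fin (ρ - 1)) (Fin (ρ - 1)) ℤ)
    (hK : ∀ i j : Fin (ρ - 1), K i j =
      if (i : ℕ) = 0 then (if (j : ℕ) = ρ - 2 then (x : ℤ) else (x : ℤ) - 1)
      else if (i : ℕ) = (j : ℕ) + 1 then 1 else 0)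
    (u : ℕ → Fin (ρ - 1) → ℤ) (hu : ∀ n i, u n i = J (n - (i : ℕ))) :
    ∀ n, ρ - 2 ≤ n → K.mulVec (u n) = u (n + 1) := by
  intro n hn
  set m := n - (ρ - 2) with hmdef
  have hnm : n = m + (ρ - 2) := by omega
  set F : ℕ → ℤ := fun k => ((x ^ k / ρ : ℕ) : ℤ) with hF
  have hdiv : ∀ k : ℕ, (ρ : ℤ) * F k = ((x ^ k : ℕ) : ℤ) - ((x ^ k % ρ : ℕ) : ℤ) := by
    intro k
    have h := Nat.div_add_mod (x ^ k) ρ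
    have h' : ((ρ * (x ^ k / ρ) + x ^ k % ρ : ℕ) : ℤ) = ((x ^ k : ℕ) : ℤ) :=
      congrArg (fun t : ℕ => (t : ℤ)) h
    rw [Nat.cast_add, Nat.cast_mul] at h'
    simp only [hF]
    linarith
  have hr1 : x ^ (n + 1) % ρ = x ^ m % ρ := by
    have h1 : x ^ m * x ^ (ρ - 1) ≡ x ^ m * 1 [MOD ρ] := Nat.ModEq.mul_left _ hferm
    have h2 : n + 1 = m + (ρ - 1) := by omega
    rw [h2, pow_add]
    simpa [Nat.ModEq] using h1
  have hr2 : x ^ (n + 2) % ρ = x ^ (m + 1) % ρ := by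
    have h1 : x ^ (m + 1) * x ^ (ρ - 1) ≡ x ^ (m + 1) * 1 [MOD ρ] :=
      Nat.ModEq.mul_left _ hferm
    have h2 : n + 2 = (m + 1) + (ρ - 1) := by omega
    rw [h2, pow_add]
    simpa [Nat.ModEq] using h1
  funext i
  simp only [Matrix.mulVec, dotProduct]
  by_cases hi : (i : ℕ) = 0
  · -- first row
    have hstep : ∀ j : Fin (ρ - 1), K i j * u n j =
        (fun t => (if t = ρ - 2 then (x : ℤ) else (x : ℤ) - 1) * J (n - t)) ((j : ℕ)) := by
      intro j
      rw [hK, hu]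
      simp [hi]
    have htel : ∀ k : ℕ, ∑ t ∈ Finset.range k, J (m + t) = F (m + k) - F m := by
      intro k
      induction k with
      | zero => simp
      | succ k ih =>
        rw [Finset.sum_range_succ, ih, hJ]
        have h1 : F (m + (k + 1)) = F (m + k + 1) := rfl
        rw [h1]
        simp only [hF]
        ring
    calc ∑ j : Fin (ρ - 1), K i j * u n j
        = ∑ t ∈ Finset.range (ρ - 1),
            (if t = ρ - 2 then (x : ℤ) else (x : ℤ) - 1) * J (n - t) := by
          rw [← Fin.sum_univ_eq_sum_range]
          exact Finset.sum_congr rfl fun j _ => hstep j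
      _ = ∑ t ∈ Finset.range (ρ - 1),
            (if (ρ - 1) - 1 - t = ρ - 2 then (x : ℤ) else (x : ℤ) - 1) *
              J (n - ((ρ - 1) - 1 - t)) := by
          exact (Finset.sum_range_reflect
            (fun t => (if t = ρ - 2 then (x : ℤ) else (x : ℤ) - 1) * J (n - t)) (ρ - 1)).symm
      _ = ∑ t ∈ Finset.range (ρ - 1),
            ((x - 1 : ℤ) * J (m + t) + (if t = 0 then J m else 0)) := by
          refine Finset.sum_congr rfl fun t ht => ?_
          have ht' : t < ρ - 1 := Finset.mem_range.mp ht
          have h1 : (ρ - 1) - 1 - t = ρ - 2 - t := by omega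
          have h2 : n - (ρ - 2 - t) = m + t := by omega
          rw [h1, h2]
          by_cases h0 : t = 0
          · subst h0
            have h3 : ρ - 2 - 0 = ρ - 2 := by omega
            rw [h3, if_pos rfl, if_pos rfl]
            have h4 : m + 0 = m := rfl
            rw [h4]
            ring
          · have h3 : ρ - 2 - t ≠ ρ - 2 := by omega
            rw [if_neg h3, if_neg h0]
            ring
      _ = (x - 1 : ℤ) * (∑ t ∈ Finset.range (ρ - 1), J (m + t)) + J m := by
          rw [Finset.sum_add_distrib, ← Finset.mul_sum]
          congr 1
          have h0 : (0 : ℕ) ∈ Finset.range (ρ - 1) := by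
            simp
            omega
          rw [Finset.sum_ite_eq' _ (0 : ℕ) (fun _ => J m), if_pos h0]
      _ = (x - 1 : ℤ) * (F (n + 1) - F m) + J m := by
          rw [htel, show m + (ρ - 1) = n + 1 by omega]
      _ = J (n + 1) := by
          rw [hJ, hJ]
          have e1 := hdiv (n + 1)
          have e2 := hdiv m
          have e3 := hdiv (m + 1)
          have e4 := hdiv (n + 2)
          have hx1 : ((x ^ (n + 2) : ℕ) : ℤ) = (x : ℤ) * ((x ^ (n + 1) : ℕ) : ℤ) := by
            rw [pow_succ, Nat.cast_mul]
            ring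
          have hx2 : ((x ^ (m + 1) : ℕ) : ℤ) = (x : ℤ) * ((x ^ m : ℕ) : ℤ) := by
            rw [pow_succ, Nat.cast_mul]
            ring
          have hρZ : (ρ : ℤ) ≠ 0 := by positivity
          have hrr1 : ((x ^ (n + 1) % ρ : ℕ) : ℤ) = ((x ^ m % ρ : ℕ) : ℤ) := by rw [hr1]
          have hrr2 : ((x ^ (n + 2) % ρ : ℕ) : ℤ) = ((x ^ (m + 1) % ρ : ℕ) : ℤ) := by rw [hr2]
          apply mul_left_cancel₀ hρZ
          have hn1 : ((x ^ (n + 1 + 1) / ρ : ℕ) : ℤ) = F (n + 2) := rfl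
          have hm1 : ((x ^ (m + 1) / ρ : ℕ) : ℤ) = F (m + 1) := rfl
          have hmm : ((x ^ m / ρ : ℕ) : ℤ) = F m := rfl
          have hnn : ((x ^ (n + 1) / ρ : ℕ) : ℤ) = F (n + 1) := rfl
          rw [hn1, hm1, hmm, hnn]
          linear_combination (x : ℤ) * e1 - (x : ℤ) * e2 + e3 - e4 - hx1 + hx2
            - (x : ℤ) * hrr1 + hrr2
      _ = u (n + 1) i := by
          rw [hu, hi]
          norm_num
  · -- lower rows
    have hi1 : (i : ℕ) - 1 < ρ - 1 := by omega
    have hsum : ∑ j : Fin (ρ - 1), K i j * u n j = J (n - ((i : ℕ) - 1)) := by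
      rw [Finset.sum_eq_single (⟨(i : ℕ) - 1, hi1⟩ : Fin (ρ - 1))]
      · rw [hK, hu]
        have h1 : (i : ℕ) = ((⟨(i : ℕ) - 1, hi1⟩ : Fin (ρ - 1)) : ℕ) + 1 := by
          simp
          omega
        rw [if_neg hi, if_pos h1]
        simp
      · intro j _ hj
        rw [hK]
        have h2 : ¬ ((i : ℕ) = (j : ℕ) + 1) := by
          intro h
          apply hj
          apply Fin.ext
          simp
          omega
        rw [if_neg hi, if_neg h2, zero_mul]
      · intro h
        exact absurd (Finset.mem_univ _) h
    rw [hsum, hu]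
    congr 1
    omega
end

section
/- For integers x ≥ 2, ρ ≥ 2 with x^(ρ-1) ≡ 1 (mod ρ), the sequence J_n = ⌊x^(n+1)/ρ⌋ - ⌊x^n/ρ⌋ satisfies J_{n+ρ-1} - J_n = (x-1)·(J_{n+ρ-2} + J_{n+ρ-3} + ... + J_n) for all n ≥ 0, where the sum has ρ-1 terms. -/
theorem stmt_17 (x ρ : ℕ) (hx : 2 ≤ x) (hρ : 2 ≤ ρ)
    (hferm : x ^ (ρ - 1) ≡ 1 [MOD ρ])
    (J : ℕ → ℤ) (hJ : ∀ n, J n = (x ^ (n + 1) / ρ : ℕ) - (x ^ n / ρ : ℕ)) :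
    ∀ n, J (n + ρ - 1) - J n =
      ((x : ℤ) - 1) * ∑ i ∈ Finset.range (ρ - 1), J (n + i) := by
  intro n
  obtain ⟨m, rfl⟩ : ∃ m, ρ = m + 2 := ⟨ρ - 2, by omega⟩
  have hferm' : x ^ (m + 1) ≡ 1 [MOD m + 2] := by simpa using hferm
  have hmod : ∀ k, x ^ (k + (m + 1)) % (m + 2) = x ^ k % (m + 2) := by
    intro k
    have : x ^ (k + (m + 1)) ≡ x ^ k * 1 [MOD m + 2] := by
      rw [pow_add]
      exact Nat.ModEq.mul_left _ hferm'
    simpa [Nat.ModEq] using this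
  have key : ∀ k, ((m : ℤ) + 2) * ((x ^ k / (m + 2) : ℕ) : ℤ)
      = (x : ℤ) ^ k - ((x ^ k % (m + 2) : ℕ) : ℤ) := by
    intro k
    have h := Nat.div_add_mod (x ^ k) (m + 2)
    have hc : ((m : ℤ) + 2) * ((x ^ k / (m + 2) : ℕ) : ℤ)
        + ((x ^ k % (m + 2) : ℕ) : ℤ) = (x : ℤ) ^ k := by
      exact_mod_cast h
    linarith
  have htel : ∑ i ∈ Finset.range (m + 1), J (n + i)
      = ((x ^ (n + (m + 1)) / (m + 2) : ℕ) : ℤ) - ((x ^ n / (m + 2) : ℕ) : ℤ) := by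
    have h := Finset.sum_range_sub (fun i => ((x ^ (n + i) / (m + 2) : ℕ) : ℤ)) (m + 1)
    simp only [Nat.add_zero] at h
    rw [← h]
    apply Finset.sum_congr rfl
    intro i _
    rw [hJ]
    simp [Nat.add_assoc]
  have h1 : n + (m + 2) - 1 = n + (m + 1) := by omega
  rw [h1]
  have hred : (m + 2 : ℕ) - 1 = m + 1 := by omega
  rw [hred, htel, hJ (n + (m + 1)), hJ n]
  have hne : ((m : ℤ) + 2) ≠ 0 := by positivity
  apply mul_left_cancel₀ hne
  have e1 := key (n + (m + 1) + 1)
  have e2 := key (n + (m + 1))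
  have e3 := key (n + 1)
  have e4 := key n
  have m1 : ((x ^ (n + (m + 1)) % (m + 2) : ℕ) : ℤ) = ((x ^ n % (m + 2) : ℕ) : ℤ) := by
    exact_mod_cast congrArg (Nat.cast : ℕ → ℤ) (hmod n)
  have m2 : ((x ^ (n + (m + 1) + 1) % (m + 2) : ℕ) : ℤ) = ((x ^ (n + 1) % (m + 2) : ℕ) : ℤ) := by
    have := hmod (n + 1)
    have h' : n + 1 + (m + 1) = n + (m + 1) + 1 := by omega
    rw [h'] at this
    exact_mod_cast congrArg (Nat.cast : ℕ → ℤ) this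
  linear_combination e1 - (x : ℤ) * e2 - e3 + (x : ℤ) * e4 - m2 + (x : ℤ) * m1
end
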